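/- Define D̂ = λ(Σ12² + Σ13²) + 2Σ12Σ13. Along any solution of the tilted Bianchi type VI_{-1/9} system (i.e. at any point satisfying the constraint equations (C1)–(C5)), one has the identity D̂' = 2(q − 2 − 3Σ+ − √3·λΣ23 + 3A v1)·D̂. In particular, the set {D̂ = 0} is invariant under the flow. -/

import Mathlib

noncomputable section

namespace BianchiVI

/-- squared tilt speed `V² = v1² + v2² + v3²`. -/
def Vsq (v1 v2 v3 : ℝ) : ℝ := v1^2 + v2^2 + v3^2

/-- `G₊ = 1 + (γ-1) V²`. -/
def Gp (γ v1 v2 v3 : ℝ) : ℝ := 1 + (γ - 1) * Vsq v1 v2 v3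

/-- total shear `Σ²`. -/
def Sig2 (sp sm s12 s13 s23 : ℝ) : ℝ := sp^2 + sm^2 + s12^2 + s13^2 + s23^2

/-- deceleration parameter `q`. -/
def qdef (γ sp sm s12 s13 s23 Om v1 v2 v3 : ℝ) : ℝ :=
  2 * Sig2 sp sm s12 s13 s23
    + (1/2) * ((3*γ - 2) + (2 - γ) * Vsq v1 v2 v3) * Om / Gp γ v1 v2 v3

/-- `P = Σ_{ab} v^a v^b · V²`, so that `S = P/V²`. -/
def Pdef (sp sm s12 s13 s23 v1 v2 v3 : ℝ) : ℝ :=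
  -2*sp*v1^2 + (sp + Real.sqrt 3 * sm) * v2^2 + (sp - Real.sqrt 3 * sm) * v3^2
    + 2*Real.sqrt 3*(s12*v1*v2 + s13*v1*v3 + s23*v2*v3)

/-- `S = Σ_{ab} c^a c^b`. -/
def Sdef (sp sm s12 s13 s23 v1 v2 v3 : ℝ) : ℝ :=
  if 0 < Vsq v1 v2 v3 then Pdef sp sm s12 s13 s23 v1 v2 v3 / Vsq v1 v2 v3 else 0

/-- the quantity `T`. -/
def Tdef (γ sp sm s12 s13 s23 A v1 v2 v3 : ℝ) : ℝ :=
  (((3*γ - 4) - 2*(γ-1)*A*v1) * (1 - Vsq v1 v2 v3)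
      + (2 - γ) * Pdef sp sm s12 s13 s23 v1 v2 v3)
    / (1 - (γ - 1) * Vsq v1 v2 v3)

/-- right-hand side of the evolution equation. -/
def rhsSp (γ sp sm s12 s13 s23 N lam A Om v1 v2 v3 : ℝ) : ℝ :=
  (qdef γ sp sm s12 s13 s23 Om v1 v2 v3 - 2) * sp + 3*(s12^2 + s13^2) - 2*N^2 + (γ*Om/(2*(Gp γ v1 v2 v3))) * (-2*v1^2 + v2^2 + v3^2)

/-- right-hand side of the evolution equation. -/
def rhsSm (γ sp sm s12 s13 s23 N lam A Om v1 v2 v3 : ℝ) : ℝ :=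
  (qdef γ sp sm s12 s13 s23 Om v1 v2 v3 - 2 - 2*Real.sqrt 3*s23*lam) * sm + Real.sqrt 3*(s12^2 - s13^2) + 2*A*N + (Real.sqrt 3*γ*Om/(2*(Gp γ v1 v2 v3))) * (v2^2 - v3^2)

/-- right-hand side of the evolution equation. -/
def rhsS12 (γ sp sm s12 s13 s23 N lam A Om v1 v2 v3 : ℝ) : ℝ :=
  (qdef γ sp sm s12 s13 s23 Om v1 v2 v3 - 2 - 3*sp - Real.sqrt 3*sm) * s12 - Real.sqrt 3*(s23 + sm*lam)*s13 + (Real.sqrt 3*γ*Om/(Gp γ v1 v2 v3))*v1*v2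

/-- right-hand side of the evolution equation. -/
def rhsS13 (γ sp sm s12 s13 s23 N lam A Om v1 v2 v3 : ℝ) : ℝ :=
  (qdef γ sp sm s12 s13 s23 Om v1 v2 v3 - 2 - 3*sp + Real.sqrt 3*sm) * s13 - Real.sqrt 3*(s23 - sm*lam)*s12 + (Real.sqrt 3*γ*Om/(Gp γ v1 v2 v3))*v1*v3

/-- right-hand side of the evolution equation. -/
def rhsS23 (γ sp sm s12 s13 s23 N lam A Om v1 v2 v3 : ℝ) : ℝ :=
  (qdef γ sp sm s12 s13 s23 Om v1 v2 v3 - 2) * s23 - 2*Real.sqrt 3*N^2*lam + 2*Real.sqrt 3*lam*sm^2 + 2*Real.sqrt 3*s12*s13 + (Real.sqrt 3*γ*Om/(Gp γ v1 v2 v3))*v2*v3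

/-- right-hand side of the evolution equation. -/
def rhsN (γ sp sm s12 s13 s23 N lam A Om v1 v2 v3 : ℝ) : ℝ :=
  (qdef γ sp sm s12 s13 s23 Om v1 v2 v3 + 2*sp + 2*Real.sqrt 3*s23*lam) * N

/-- right-hand side of the evolution equation. -/
def rhsLam (γ sp sm s12 s13 s23 N lam A Om v1 v2 v3 : ℝ) : ℝ :=
  2*Real.sqrt 3*s23*(1 - lam^2)

/-- right-hand side of the evolution equation. -/
def rhsA (γ sp sm s12 s13 s23 N lam A Om v1 v2 v3 : ℝ) : ℝ :=
  (qdef γ sp sm s12 s13 s23 Om v1 v2 v3 + 2*sp) * A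

/-- right-hand side of the evolution equation. -/
def rhsOm (γ sp sm s12 s13 s23 N lam A Om v1 v2 v3 : ℝ) : ℝ :=
  (Om/(Gp γ v1 v2 v3)) * (2*(qdef γ sp sm s12 s13 s23 Om v1 v2 v3) - (3*γ-2) + 2*γ*A*v1 + (2*(qdef γ sp sm s12 s13 s23 Om v1 v2 v3)*(γ-1) - (2-γ)) * Vsq v1 v2 v3 - γ*(Pdef sp sm s12 s13 s23 v1 v2 v3))

/-- right-hand side of the evolution equation. -/
def rhsV1 (γ sp sm s12 s13 s23 N lam A Om v1 v2 v3 : ℝ) : ℝ :=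
  ((Tdef γ sp sm s12 s13 s23 A v1 v2 v3) + 2*sp)*v1 - 2*Real.sqrt 3*s13*v3 - 2*Real.sqrt 3*s12*v2 - A*(v2^2 + v3^2) - Real.sqrt 3*N*(v2^2 - v3^2)

/-- right-hand side of the evolution equation. -/
def rhsV2 (γ sp sm s12 s13 s23 N lam A Om v1 v2 v3 : ℝ) : ℝ :=
  ((Tdef γ sp sm s12 s13 s23 A v1 v2 v3) - sp - Real.sqrt 3*sm)*v2 - Real.sqrt 3*(s23 + sm*lam)*v3 + Real.sqrt 3*lam*N*v1*v3 + (A + Real.sqrt 3*N)*v1*v2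

/-- right-hand side of the evolution equation. -/
def rhsV3 (γ sp sm s12 s13 s23 N lam A Om v1 v2 v3 : ℝ) : ℝ :=
  ((Tdef γ sp sm s12 s13 s23 A v1 v2 v3) - sp + Real.sqrt 3*sm)*v3 - Real.sqrt 3*(s23 - sm*lam)*v2 - Real.sqrt 3*lam*N*v1*v2 + (A - Real.sqrt 3*N)*v1*v3

/-- the five constraint equations (C1)-(C5). -/
def SatisfiesConstraints (γ sp sm s12 s13 s23 N lam A Om v1 v2 v3 : ℝ) : Prop :=
  Sig2 sp sm s12 s13 s23 + A^2 + N^2 + Om = 1 ∧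
  2*sp*A + 2*sm*N + γ*Om*v1/(Gp γ v1 v2 v3) = 0 ∧
  -(s12*(N + Real.sqrt 3*A) + s13*lam*N) + γ*Om*v2/(Gp γ v1 v2 v3) = 0 ∧
  s13*(N - Real.sqrt 3*A) + s12*lam*N + γ*Om*v3/(Gp γ v1 v2 v3) = 0 ∧
  3*A^2 = (1 - lam^2)*N^2

/-- equilibrium point: all twelve right-hand sides vanish. -/
def IsEquilibrium (γ sp sm s12 s13 s23 N lam A Om v1 v2 v3 : ℝ) : Prop :=
  rhsSp γ sp sm s12 s13 s23 N lam A Om v1 v2 v3 = 0 ∧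
  rhsSm γ sp sm s12 s13 s23 N lam A Om v1 v2 v3 = 0 ∧
  rhsS12 γ sp sm s12 s13 s23 N lam A Om v1 v2 v3 = 0 ∧
  rhsS13 γ sp sm s12 s13 s23 N lam A Om v1 v2 v3 = 0 ∧
  rhsS23 γ sp sm s12 s13 s23 N lam A Om v1 v2 v3 = 0 ∧
  rhsN γ sp sm s12 s13 s23 N lam A Om v1 v2 v3 = 0 ∧
  rhsLam γ sp sm s12 s13 s23 N lam A Om v1 v2 v3 = 0 ∧
  rhsA γ sp sm s12 s13 s23 N lam A Om v1 v2 v3 = 0 ∧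
  rhsOm γ sp sm s12 s13 s23 N lam A Om v1 v2 v3 = 0 ∧
  rhsV1 γ sp sm s12 s13 s23 N lam A Om v1 v2 v3 = 0 ∧
  rhsV2 γ sp sm s12 s13 s23 N lam A Om v1 v2 v3 = 0 ∧
  rhsV3 γ sp sm s12 s13 s23 N lam A Om v1 v2 v3 = 0

/-- a solution of the tilted Bianchi type VI_(-1/9) system on the set `dom`:
the twelve evolution equations and the five constraints hold at every `τ ∈ dom`. -/
def IsSolutionOn (γ : ℝ) (dom : Set ℝ) (sp sm s12 s13 s23 N lam A Om v1 v2 v3 : ℝ → ℝ) : Prop :=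
  ∀ τ ∈ dom,
    (HasDerivAt sp (rhsSp γ (sp τ) (sm τ) (s12 τ) (s13 τ) (s23 τ) (N τ) (lam τ) (A τ) (Om τ) (v1 τ) (v2 τ) (v3 τ)) τ ∧
    HasDerivAt sm (rhsSm γ (sp τ) (sm τ) (s12 τ) (s13 τ) (s23 τ) (N τ) (lam τ) (A τ) (Om τ) (v1 τ) (v2 τ) (v3 τ)) τ ∧
    HasDerivAt s12 (rhsS12 γ (sp τ) (sm τ) (s12 τ) (s13 τ) (s23 τ) (N τ) (lam τ) (A τ) (Om τ) (v1 τ) (v2 τ) (v3 τ)) τ ∧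
    HasDerivAt s13 (rhsS13 γ (sp τ) (sm τ) (s12 τ) (s13 τ) (s23 τ) (N τ) (lam τ) (A τ) (Om τ) (v1 τ) (v2 τ) (v3 τ)) τ ∧
    HasDerivAt s23 (rhsS23 γ (sp τ) (sm τ) (s12 τ) (s13 τ) (s23 τ) (N τ) (lam τ) (A τ) (Om τ) (v1 τ) (v2 τ) (v3 τ)) τ ∧
    HasDerivAt N (rhsN γ (sp τ) (sm τ) (s12 τ) (s13 τ) (s23 τ) (N τ) (lam τ) (A τ) (Om τ) (v1 τ) (v2 τ) (v3 τ)) τ ∧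
    HasDerivAt lam (rhsLam γ (sp τ) (sm τ) (s12 τ) (s13 τ) (s23 τ) (N τ) (lam τ) (A τ) (Om τ) (v1 τ) (v2 τ) (v3 τ)) τ ∧
    HasDerivAt A (rhsA γ (sp τ) (sm τ) (s12 τ) (s13 τ) (s23 τ) (N τ) (lam τ) (A τ) (Om τ) (v1 τ) (v2 τ) (v3 τ)) τ ∧
    HasDerivAt Om (rhsOm γ (sp τ) (sm τ) (s12 τ) (s13 τ) (s23 τ) (N τ) (lam τ) (A τ) (Om τ) (v1 τ) (v2 τ) (v3 τ)) τ ∧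
    HasDerivAt v1 (rhsV1 γ (sp τ) (sm τ) (s12 τ) (s13 τ) (s23 τ) (N τ) (lam τ) (A τ) (Om τ) (v1 τ) (v2 τ) (v3 τ)) τ ∧
    HasDerivAt v2 (rhsV2 γ (sp τ) (sm τ) (s12 τ) (s13 τ) (s23 τ) (N τ) (lam τ) (A τ) (Om τ) (v1 τ) (v2 τ) (v3 τ)) τ ∧
    HasDerivAt v3 (rhsV3 γ (sp τ) (sm τ) (s12 τ) (s13 τ) (s23 τ) (N τ) (lam τ) (A τ) (Om τ) (v1 τ) (v2 τ) (v3 τ)) τ) ∧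
    SatisfiesConstraints γ (sp τ) (sm τ) (s12 τ) (s13 τ) (s23 τ) (N τ) (lam τ) (A τ) (Om τ) (v1 τ) (v2 τ) (v3 τ)

/-- `D̂ = λ(Σ12² + Σ13²) + 2 Σ12 Σ13`. -/
def Dhat (lam s12 s13 : ℝ) : ℝ := lam*(s12^2 + s13^2) + 2*s12*s13


/-! ### Auxiliary lemmas -/

lemma zero_forward' {f c K : ℝ → ℝ} (hf : ∀ t, HasDerivAt f (c t * f t) t)
    (hK : Continuous K) (hb : ∀ t, |c t| ≤ K t)
    {a b : ℝ} (hab : a ≤ b) (h0 : f a = 0) : f b = 0 := by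
  obtain ⟨M, hM⟩ := (isCompact_Icc (a := a) (b := b)).exists_bound_of_continuousOn hK.continuousOn
  have hcont : ContinuousOn f (Set.Icc a b) :=
    (fun t _ => ((hf t).differentiableAt.continuousAt).continuousWithinAt)
  have hder : ∀ x ∈ Set.Ico a b, HasDerivWithinAt f (c x * f x) (Set.Ici x) x :=
    fun x _ => (hf x).hasDerivWithinAt
  have hbound : ∀ x ∈ Set.Ico a b, ‖c x * f x‖ ≤ M * ‖f x‖ + 0 := by
    intro x hx
    have h1 : |c x| ≤ M := le_trans (hb x) (le_trans (le_abs_self _) (hM x ⟨hx.1, le_of_lt hx.2⟩))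
    have h2 : ‖c x * f x‖ = |c x| * ‖f x‖ := by simp [abs_mul]
    rw [h2, add_zero]
    exact mul_le_mul_of_nonneg_right h1 (norm_nonneg _)
  have key := norm_le_gronwallBound_of_norm_deriv_right_le hcont hder
    (by simp [h0] : ‖f a‖ ≤ 0) hbound b ⟨hab, le_refl b⟩
  rw [gronwallBound_ε0] at key
  simpa using le_antisymm (by simpa using key) (abs_nonneg (f b))

lemma zero_of_linear' {f c K : ℝ → ℝ} (hf : ∀ t, HasDerivAt f (c t * f t) t)
    (hK : Continuous K) (hb : ∀ t, |c t| ≤ K t)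
    (τ₀ : ℝ) (h0 : f τ₀ = 0) : ∀ τ, f τ = 0 := by
  intro τ
  rcases le_total τ₀ τ with h | h
  · exact zero_forward' hf hK hb h h0
  · have hg : ∀ t, HasDerivAt (fun s => f (-s)) ((-c (-t)) * f (-t)) t := by
      intro t
      have := (hf (-t)).comp t (hasDerivAt_neg t)
      refine this.congr_deriv ?_
      ring
    have hres : (fun s => f (-s)) (-τ) = 0 :=
      zero_forward' (f := fun s => f (-s)) (c := fun s => -c (-s)) (K := fun s => K (-s))
        hg (hK.comp continuous_neg) (fun t => by simpa using hb (-t))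
        (by linarith : -τ₀ ≤ -τ) (by simpa using h0)
    simpa using hres

lemma dhat_deriv_value (g sp sm s12 s13 s23 N lam A Om v1 v2 v3 : ℝ)
    (hc3 : -(s12*(N + Real.sqrt 3*A) + s13*lam*N) + g*Om*v2/(Gp g v1 v2 v3) = 0)
    (hc4 : s13*(N - Real.sqrt 3*A) + s12*lam*N + g*Om*v3/(Gp g v1 v2 v3) = 0) :
    rhsLam g sp sm s12 s13 s23 N lam A Om v1 v2 v3 * (s12^2 + s13^2)
      + lam * (2*s12*(rhsS12 g sp sm s12 s13 s23 N lam A Om v1 v2 v3)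
          + 2*s13*(rhsS13 g sp sm s12 s13 s23 N lam A Om v1 v2 v3))
      + 2*((rhsS12 g sp sm s12 s13 s23 N lam A Om v1 v2 v3)*s13
          + s12*(rhsS13 g sp sm s12 s13 s23 N lam A Om v1 v2 v3))
    = 2*(qdef g sp sm s12 s13 s23 Om v1 v2 v3 - 2 - 3*sp - Real.sqrt 3*lam*s23 + 3*A*v1)
        * Dhat lam s12 s13 := by
  have hs3 : Real.sqrt 3 ^ 2 = 3 := Real.sq_sqrt (by norm_num)
  simp only [rhsLam, rhsS12, rhsS13, Dhat]
  linear_combination (2*Real.sqrt 3*v1*(lam*s12+s13))*hc3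
    + (2*Real.sqrt 3*v1*(lam*s13+s12))*hc4
    + (2*A*v1*(lam*(s12^2+s13^2)+2*s12*s13))*hs3

/-- an everywhere-defined substitute for `q` that is continuous (no division by `G₊`). -/
def qalt (g sp sm s12 s13 s23 N lam A Om v1 v2 v3 : ℝ) : ℝ :=
  2*Sig2 sp sm s12 s13 s23 + (1/2)*((3*g-2)+(2-g)*Vsq v1 v2 v3) *
    (Om + ((1-g)/g) * (v1*(-(2*sp*A+2*sm*N)) + v2*(s12*(N+Real.sqrt 3*A)+s13*lam*N)
      + v3*(-(s13*(N-Real.sqrt 3*A)+s12*lam*N))))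

lemma qdef_eq_qalt (g sp sm s12 s13 s23 N lam A Om v1 v2 v3 : ℝ)
    (hg : g ≠ 0) (hG : Gp g v1 v2 v3 ≠ 0)
    (hc2 : 2*sp*A + 2*sm*N + g*Om*v1/(Gp g v1 v2 v3) = 0)
    (hc3 : -(s12*(N + Real.sqrt 3*A) + s13*lam*N) + g*Om*v2/(Gp g v1 v2 v3) = 0)
    (hc4 : s13*(N - Real.sqrt 3*A) + s12*lam*N + g*Om*v3/(Gp g v1 v2 v3) = 0) :
    qdef g sp sm s12 s13 s23 Om v1 v2 v3 = qalt g sp sm s12 s13 s23 N lam A Om v1 v2 v3 := by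
  have e1 : g*Om*v1/(Gp g v1 v2 v3) = -(2*sp*A+2*sm*N) := by linarith
  have e2 : g*Om*v2/(Gp g v1 v2 v3) = s12*(N+Real.sqrt 3*A)+s13*lam*N := by linarith
  have e3 : g*Om*v3/(Gp g v1 v2 v3) = -(s13*(N-Real.sqrt 3*A)+s12*lam*N) := by linarith
  have hOm : Om / (Gp g v1 v2 v3)
      = Om + (1-g) * (Om * Vsq v1 v2 v3 / Gp g v1 v2 v3) := by
    field_simp
    simp only [Gp]
    ring
  have hg' : g * (Om * Vsq v1 v2 v3 / Gp g v1 v2 v3)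
      = v1*(-(2*sp*A+2*sm*N)) + v2*(s12*(N+Real.sqrt 3*A)+s13*lam*N)
        + v3*(-(s13*(N-Real.sqrt 3*A)+s12*lam*N)) := by
    rw [← e1, ← e2, ← e3]
    simp only [Vsq]
    ring
  have hY : Om * Vsq v1 v2 v3 / Gp g v1 v2 v3
      = (v1*(-(2*sp*A+2*sm*N)) + v2*(s12*(N+Real.sqrt 3*A)+s13*lam*N)
        + v3*(-(s13*(N-Real.sqrt 3*A)+s12*lam*N))) / g := by
    rw [eq_div_iff hg, ← hg']
    ring
  simp only [qdef, qalt]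
  linear_combination ((1/2)*((3*g-2)+(2-g)*Vsq v1 v2 v3)) * hOm
    + ((1/2)*((3*g-2)+(2-g)*Vsq v1 v2 v3)*(1-g)) * hY

theorem dhat_evolution_and_invariance (γ : ℝ) (hγ : 0 < γ ∧ γ < 2)
    (sp sm s12 s13 s23 N lam A Om v1 v2 v3 : ℝ → ℝ)
    (hsol : IsSolutionOn γ Set.univ sp sm s12 s13 s23 N lam A Om v1 v2 v3) :
    (∀ τ : ℝ, HasDerivAt (fun t => Dhat (lam t) (s12 t) (s13 t))
        (2 * (qdef γ (sp τ) (sm τ) (s12 τ) (s13 τ) (s23 τ) (Om τ) (v1 τ) (v2 τ) (v3 τ) - 2 - 3*(sp τ)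
            - Real.sqrt 3*(lam τ)*(s23 τ) + 3*(A τ)*(v1 τ))
          * Dhat (lam τ) (s12 τ) (s13 τ)) τ) ∧
    (∀ τ₀ : ℝ, Dhat (lam τ₀) (s12 τ₀) (s13 τ₀) = 0 →
      ∀ τ : ℝ, Dhat (lam τ) (s12 τ) (s13 τ) = 0) := by
  have hγ0 : γ ≠ 0 := ne_of_gt hγ.1
  -- the coefficient function
  set c : ℝ → ℝ := fun t =>
    2 * (qdef γ (sp t) (sm t) (s12 t) (s13 t) (s23 t) (Om t) (v1 t) (v2 t) (v3 t) - 2 - 3*(sp t)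
        - Real.sqrt 3*(lam t)*(s23 t) + 3*(A t)*(v1 t)) with hc
  have part1 : ∀ τ : ℝ, HasDerivAt (fun t => Dhat (lam t) (s12 t) (s13 t))
      (c τ * Dhat (lam τ) (s12 τ) (s13 τ)) τ := by
    intro τ
    obtain ⟨⟨h1,h2,h3,h4,h5,h6,h7,h8,h9,h10,h11,h12⟩, hc1,hc2,hc3,hc4,hc5⟩ :=
      hsol τ (Set.mem_univ τ)
    have hfun : (fun t => Dhat (lam t) (s12 t) (s13 t))
        = (fun t => lam t * ((s12 t)^2 + (s13 t)^2) + 2*(s12 t * s13 t)) := by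
      funext t; simp only [Dhat]; ring
    have h := (h7.mul ((h3.pow 2).add (h4.pow 2))).add ((h3.mul h4).const_mul 2)
    rw [hfun]
    refine h.congr_deriv ?_
    have hv := dhat_deriv_value γ (sp τ) (sm τ) (s12 τ) (s13 τ) (s23 τ) (N τ) (lam τ) (A τ)
      (Om τ) (v1 τ) (v2 τ) (v3 τ) hc3 hc4
    push_cast [Pi.add_apply, Pi.pow_apply]
    linear_combination hv
  refine ⟨part1, ?_⟩
  -- continuity of all components
  have csp : Continuous sp := continuous_iff_continuousAt.mpr
    fun t => ((hsol t (Set.mem_univ t)).1.1).continuousAt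
  have csm : Continuous sm := continuous_iff_continuousAt.mpr
    fun t => ((hsol t (Set.mem_univ t)).1.2.1).continuousAt
  have cs12 : Continuous s12 := continuous_iff_continuousAt.mpr
    fun t => ((hsol t (Set.mem_univ t)).1.2.2.1).continuousAt
  have cs13 : Continuous s13 := continuous_iff_continuousAt.mpr
    fun t => ((hsol t (Set.mem_univ t)).1.2.2.2.1).continuousAt
  have cs23 : Continuous s23 := continuous_iff_continuousAt.mpr
    fun t => ((hsol t (Set.mem_univ t)).1.2.2.2.2.1).continuousAt
  have cN : Continuous N := continuous_iff_continuousAt.mpr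
    fun t => ((hsol t (Set.mem_univ t)).1.2.2.2.2.2.1).continuousAt
  have clam : Continuous lam := continuous_iff_continuousAt.mpr
    fun t => ((hsol t (Set.mem_univ t)).1.2.2.2.2.2.2.1).continuousAt
  have cA : Continuous A := continuous_iff_continuousAt.mpr
    fun t => ((hsol t (Set.mem_univ t)).1.2.2.2.2.2.2.2.1).continuousAt
  have cOm : Continuous Om := continuous_iff_continuousAt.mpr
    fun t => ((hsol t (Set.mem_univ t)).1.2.2.2.2.2.2.2.2.1).continuousAt
  have cv1 : Continuous v1 := continuous_iff_continuousAt.mpr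
    fun t => ((hsol t (Set.mem_univ t)).1.2.2.2.2.2.2.2.2.2.1).continuousAt
  have cv2 : Continuous v2 := continuous_iff_continuousAt.mpr
    fun t => ((hsol t (Set.mem_univ t)).1.2.2.2.2.2.2.2.2.2.2.1).continuousAt
  have cv3 : Continuous v3 := continuous_iff_continuousAt.mpr
    fun t => ((hsol t (Set.mem_univ t)).1.2.2.2.2.2.2.2.2.2.2.2).continuousAt
  -- two continuous candidate values for c
  set cA1 : ℝ → ℝ := fun t =>
    2 * (qalt γ (sp t) (sm t) (s12 t) (s13 t) (s23 t) (N t) (lam t) (A t) (Om t) (v1 t) (v2 t) (v3 t)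
        - 2 - 3*(sp t) - Real.sqrt 3*(lam t)*(s23 t) + 3*(A t)*(v1 t)) with hcA1
  set cA2 : ℝ → ℝ := fun t =>
    2 * (2*Sig2 (sp t) (sm t) (s12 t) (s13 t) (s23 t)
        - 2 - 3*(sp t) - Real.sqrt 3*(lam t)*(s23 t) + 3*(A t)*(v1 t)) with hcA2
  have hcases : ∀ t, c t = cA1 t ∨ c t = cA2 t := by
    intro t
    obtain ⟨_, hc1,hc2,hc3,hc4,hc5⟩ := hsol t (Set.mem_univ t)
    by_cases hG : Gp γ (v1 t) (v2 t) (v3 t) = 0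
    · right
      have : qdef γ (sp t) (sm t) (s12 t) (s13 t) (s23 t) (Om t) (v1 t) (v2 t) (v3 t)
          = 2*Sig2 (sp t) (sm t) (s12 t) (s13 t) (s23 t) := by
        simp only [qdef, hG, div_zero, add_zero]
      simp only [hc, hcA2, this]
    · left
      have := qdef_eq_qalt γ (sp t) (sm t) (s12 t) (s13 t) (s23 t) (N t) (lam t) (A t) (Om t)
        (v1 t) (v2 t) (v3 t) hγ0 hG hc2 hc3 hc4
      simp only [hc, hcA1, this]
  have hKcont : Continuous (fun t => |cA1 t| + |cA2 t|) := by
    have h1 : Continuous cA1 := by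
      simp only [hcA1, qalt, Sig2, Vsq]
      fun_prop
    have h2 : Continuous cA2 := by
      simp only [hcA2, Sig2]
      fun_prop
    exact h1.abs.add h2.abs
  have hbound : ∀ t, |c t| ≤ |cA1 t| + |cA2 t| := by
    intro t
    rcases hcases t with h | h
    · rw [h]; have := abs_nonneg (cA2 t); linarith
    · rw [h]; have := abs_nonneg (cA1 t); linarith
  intro τ₀ h0 τ
  exact zero_of_linear' part1 hKcont hbound τ₀ h0 τ


end BianchiVI
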